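/- For every g = [[a,b],[c,d]] ∈ SL₂(ℝ) one has h − g·h·g⁻¹ ∈ C if and only if ab ≥ 0, cd ≥ 0 and bc ≥ 0. Consequently the compression semigroup S(h,C) := {g ∈ SL₂(ℝ) : h − Ad(g)h ∈ C} equals {[[a,b],[c,d]] ∈ SL₂(ℝ) : ab ≥ 0, cd ≥ 0, bc ≥ 0}. -/

import Mathlib

open Matrix

/-- The grading element `h = diag(1/2, -1/2)` of `sl₂(ℝ)`. -/
noncomputable def hSL2 : Matrix (Fin 2) (Fin 2) ℝ := !![(1 : ℝ)/2, 0; 0, -(1/2)]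

/-- The invariant cone `C = {[[a,b],[c,−a]] : b ≥ 0, c ≤ 0, a² ≤ −bc}` in `sl₂(ℝ)`. -/
def CSL2 : Set (Matrix (Fin 2) (Fin 2) ℝ) :=
  {m | m 1 1 = -(m 0 0) ∧ 0 ≤ m 0 1 ∧ m 1 0 ≤ 0 ∧ (m 0 0) ^ 2 ≤ -(m 0 1 * m 1 0)}

lemma statement5_key (g : Matrix.SpecialLinearGroup (Fin 2) ℝ) :
      (hSL2 - (g : Matrix (Fin 2) (Fin 2) ℝ) * hSL2 *
          ((g⁻¹ : Matrix.SpecialLinearGroup (Fin 2) ℝ) : Matrix (Fin 2) (Fin 2) ℝ) ∈ CSL2) ↔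
        (0 ≤ (g : Matrix (Fin 2) (Fin 2) ℝ) 0 0 * (g : Matrix (Fin 2) (Fin 2) ℝ) 0 1 ∧
         0 ≤ (g : Matrix (Fin 2) (Fin 2) ℝ) 1 0 * (g : Matrix (Fin 2) (Fin 2) ℝ) 1 1 ∧
         0 ≤ (g : Matrix (Fin 2) (Fin 2) ℝ) 0 1 * (g : Matrix (Fin 2) (Fin 2) ℝ) 1 0) := by
  have hdet : (g : Matrix (Fin 2) (Fin 2) ℝ) 0 0 * (g : Matrix (Fin 2) (Fin 2) ℝ) 1 1 -
      (g : Matrix (Fin 2) (Fin 2) ℝ) 0 1 * (g : Matrix (Fin 2) (Fin 2) ℝ) 1 0 = 1 := by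
    have h2 := g.2
    rw [Matrix.det_fin_two] at h2
    exact h2
  have hinv : ((g⁻¹ : Matrix.SpecialLinearGroup (Fin 2) ℝ) : Matrix (Fin 2) (Fin 2) ℝ) =
      !![(g : Matrix (Fin 2) (Fin 2) ℝ) 1 1, -(g : Matrix (Fin 2) (Fin 2) ℝ) 0 1;
        -(g : Matrix (Fin 2) (Fin 2) ℝ) 1 0, (g : Matrix (Fin 2) (Fin 2) ℝ) 0 0] := by
    exact (Matrix.SpecialLinearGroup.coe_inv g).trans (Matrix.adjugate_fin_two _)
  rw [hinv]
  simp only [CSL2, Set.mem_setOf_eq, SpecialLinearGroup.coe_inv, Matrix.adjugate_fin_two,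
    hSL2, Matrix.sub_apply, Matrix.mul_apply, Fin.sum_univ_two]
  norm_num [Matrix.cons_val_zero, Matrix.cons_val_one, Matrix.head_cons]
  set a := (g : Matrix (Fin 2) (Fin 2) ℝ) 0 0
  set b := (g : Matrix (Fin 2) (Fin 2) ℝ) 0 1
  set c := (g : Matrix (Fin 2) (Fin 2) ℝ) 1 0
  set d := (g : Matrix (Fin 2) (Fin 2) ℝ) 1 1
  constructor
  · rintro ⟨h1, h2, h3, h4⟩
    refine ⟨by nlinarith, by nlinarith, by nlinarith⟩
  · rintro ⟨h1, h2, h3⟩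
    refine ⟨by ring, by nlinarith, by nlinarith, by nlinarith⟩

/-- for `g = [[a,b],[c,d]] ∈ SL₂(ℝ)` we have `h − g·h·g⁻¹ ∈ C` iff
`ab ≥ 0`, `cd ≥ 0` and `bc ≥ 0`; consequently
`S(h,C) = {g ∈ SL₂(ℝ) : ab ≥ 0, cd ≥ 0, bc ≥ 0}`. -/
theorem statement5 :
    (∀ g : Matrix.SpecialLinearGroup (Fin 2) ℝ,
      (hSL2 - (g : Matrix (Fin 2) (Fin 2) ℝ) * hSL2 *
          ((g⁻¹ : Matrix.SpecialLinearGroup (Fin 2) ℝ) : Matrix (Fin 2) (Fin 2) ℝ) ∈ CSL2) ↔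
        (0 ≤ (g : Matrix (Fin 2) (Fin 2) ℝ) 0 0 * (g : Matrix (Fin 2) (Fin 2) ℝ) 0 1 ∧
         0 ≤ (g : Matrix (Fin 2) (Fin 2) ℝ) 1 0 * (g : Matrix (Fin 2) (Fin 2) ℝ) 1 1 ∧
         0 ≤ (g : Matrix (Fin 2) (Fin 2) ℝ) 0 1 * (g : Matrix (Fin 2) (Fin 2) ℝ) 1 0)) ∧
    {g : Matrix.SpecialLinearGroup (Fin 2) ℝ |
        hSL2 - (g : Matrix (Fin 2) (Fin 2) ℝ) * hSL2 *
          ((g⁻¹ : Matrix.SpecialLinearGroup (Fin 2) ℝ) : Matrix (Fin 2) (Fin 2) ℝ) ∈ CSL2} =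
      {g : Matrix.SpecialLinearGroup (Fin 2) ℝ |
        0 ≤ (g : Matrix (Fin 2) (Fin 2) ℝ) 0 0 * (g : Matrix (Fin 2) (Fin 2) ℝ) 0 1 ∧
        0 ≤ (g : Matrix (Fin 2) (Fin 2) ℝ) 1 0 * (g : Matrix (Fin 2) (Fin 2) ℝ) 1 1 ∧
        0 ≤ (g : Matrix (Fin 2) (Fin 2) ℝ) 0 1 * (g : Matrix (Fin 2) (Fin 2) ℝ) 1 0} := by
  exact ⟨statement5_key, Set.ext fun g => statement5_key g⟩
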